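/- Let n be an odd positive integer and a, b ∈ ℝ. Define 𝔊(x,y,z) = a·Q_n(x,y)·sin z + b·Q_n(x,z)·sin y, and let V be the vector field on ℝ³ given by V(x,y,z) = (𝔊(x,y,z), 𝔊(y,z,x), 𝔊(z,x,y)). Then the divergence of V satisfies ∇·V(x,y,z) = n·(a + (−1)^{(n+1)/2} b)·(Q_{n−1}(x,y)·sin z + Q_{n−1}(y,z)·sin x + Q_{n−1}(z,x)·sin y) for all (x,y,z) ∈ ℝ³. -/

import Mathlib

noncomputable section

open Real

/-- The standard harmonic polynomial `P_n(x,y) = Re((x+iy)^n)`. -/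
def polyP (n : ℕ) (x y : ℝ) : ℝ := ((x + y * Complex.I) ^ n).re

/-- The standard harmonic polynomial `Q_n(x,y) = Im((x+iy)^n)`. -/
def polyQ (n : ℕ) (x y : ℝ) : ℝ := ((x + y * Complex.I) ^ n).im

/-- Partial derivative in the `i`-th coordinate direction. -/
def pd (i : Fin 3) (F : (Fin 3 → ℝ) → ℝ) : (Fin 3 → ℝ) → ℝ :=
  fun v => deriv (fun t => F (Function.update v i t)) (v i)

/-- Divergence of a vector field on ℝ³. -/
def div3 (V : (Fin 3 → ℝ) → (Fin 3 → ℝ)) : (Fin 3 → ℝ) → ℝ :=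
  fun v => pd 0 (fun w => V w 0) v + pd 1 (fun w => V w 1) v + pd 2 (fun w => V w 2) v

/-- Curl of a vector field on ℝ³. -/
def curl3 (V : (Fin 3 → ℝ) → (Fin 3 → ℝ)) : (Fin 3 → ℝ) → (Fin 3 → ℝ) :=
  fun v => ![pd 1 (fun w => V w 2) v - pd 2 (fun w => V w 1) v,
             pd 2 (fun w => V w 0) v - pd 0 (fun w => V w 2) v,
             pd 0 (fun w => V w 1) v - pd 1 (fun w => V w 0) v]

/-- Laplacian of a scalar function on ℝ³. -/
def lap3 (F : (Fin 3 → ℝ) → ℝ) : (Fin 3 → ℝ) → ℝ :=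
  fun v => pd 0 (pd 0 F) v + pd 1 (pd 1 F) v + pd 2 (pd 2 F) v


lemma hasDerivAt_Q (n : ℕ) (x y : ℝ) :
    HasDerivAt (fun t : ℝ => polyQ n t y) ((n : ℝ) * polyQ (n-1) x y) x := by
  have h1 : HasDerivAt (fun z : ℂ => (z + y*Complex.I)^n)
      ((n : ℂ) * ((x:ℂ) + y*Complex.I)^(n-1)) (x : ℂ) := by
    simpa [Function.comp_def] using ((hasDerivAt_pow n ((x:ℂ) + y*Complex.I)).comp (x:ℂ)
      ((hasDerivAt_id (x:ℂ)).add_const ((y:ℂ)*Complex.I)))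
  have h3 := (Complex.imCLM.hasFDerivAt).comp_hasDerivAt x h1.comp_ofReal
  simpa [polyQ, Complex.mul_im, Function.comp_def] using h3

lemma polyQ_swap (k : ℕ) (x y : ℝ) :
    polyQ (k+k) y x = -((-1:ℝ)^k) * polyQ (k+k) x y := by
  have h : ((y:ℂ) + x*Complex.I) = Complex.I * (starRingEnd ℂ ((x:ℂ) + y*Complex.I)) := by
    simp [Complex.ext_iff]
  have hc : ((-1:ℂ))^k = (((-1:ℝ)^k : ℝ) : ℂ) := by push_cast; ring
  unfold polyQ
  rw [h, mul_pow, ← map_pow, pow_add, ← mul_pow, Complex.I_mul_I, hc,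
    Complex.im_ofReal_mul, Complex.conj_im]
  ring

/-- divergence formula for the field built from
`𝔊(x,y,z) = a·Q_n(x,y)·sin z + b·Q_n(x,z)·sin y` with `n` odd. -/
theorem div_formula_odd (n : ℕ) (hn : 0 < n) (hodd : Odd n) (a b : ℝ) :
    let G : ℝ → ℝ → ℝ → ℝ := fun x y z =>
      a * polyQ n x y * Real.sin z + b * polyQ n x z * Real.sin y
    let V : (Fin 3 → ℝ) → (Fin 3 → ℝ) := fun v =>
      ![G (v 0) (v 1) (v 2), G (v 1) (v 2) (v 0), G (v 2) (v 0) (v 1)]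
    ∀ v : Fin 3 → ℝ,
      div3 V v = (n : ℝ) * (a + (-1 : ℝ) ^ ((n + 1) / 2) * b) *
        (polyQ (n - 1) (v 0) (v 1) * Real.sin (v 2)
          + polyQ (n - 1) (v 1) (v 2) * Real.sin (v 0)
          + polyQ (n - 1) (v 2) (v 0) * Real.sin (v 1)) := by
  intro G V v
  obtain ⟨k, hk⟩ := hodd
  have hG : ∀ (x p q : ℝ), deriv (fun t => G t p q) x =
      (n:ℝ) * (a * polyQ (n-1) x p * Real.sin q + b * polyQ (n-1) x q * Real.sin p) := by
    intro x p q
    have h1 := ((hasDerivAt_Q n x p).const_mul a).mul_const (Real.sin q)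
    have h2 := ((hasDerivAt_Q n x q).const_mul b).mul_const (Real.sin p)
    rw [show deriv (fun t => G t p q) x = _ from (h1.add h2).deriv]
    ring
  have hm : n - 1 = k + k := by omega
  have he : (n + 1) / 2 = k + 1 := by omega
  have e0 : pd 0 (fun w => V w 0) v = deriv (fun t => G t (v 1) (v 2)) (v 0) := by
    simp [pd, V, Function.update]
  have e1 : pd 1 (fun w => V w 1) v = deriv (fun t => G t (v 2) (v 0)) (v 1) := by
    simp [pd, V, Function.update]
  have e2 : pd 2 (fun w => V w 2) v = deriv (fun t => G t (v 0) (v 1)) (v 2) := by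
    simp [pd, V, Function.update]
  rw [div3, e0, e1, e2, hG, hG, hG, hm, he,
    polyQ_swap k (v 2) (v 0), polyQ_swap k (v 0) (v 1), polyQ_swap k (v 1) (v 2)]
  ring
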